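/- Let G be a finite graph, let V_i ⊆ V_{i+1} be vertex subsets, and let v be a vertex with V_{i+1} \ V_i ⊆ N[v] and N[v] ∩ V_i = ∅. If D* is a minimal dominating set of G(V_i) that does not dominate V_{i+1}, then D* ∪ {v} is a minimal dominating set of G(V_{i+1}). -/
import Mathlib


open Set

variable {V : Type*}

/-- The closed neighborhood of a set of vertices: `N[X]`. -/
def closedNbhd (G : SimpleGraph V) (X : Set V) : Set V :=
  {y | ∃ x ∈ X, y = x ∨ G.Adj x y}

/-- `X` dominates `A` in `G`: `A ⊆ N[X]`. -/
def Dominates (G : SimpleGraph V) (X A : Set V) : Prop :=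
  A ⊆ closedNbhd G X

/-- `X` is an inclusion-wise minimal set dominating `A` in `G`. -/
def MinDom (G : SimpleGraph V) (X A : Set V) : Prop :=
  Dominates G X A ∧ ∀ Y, Y ⊂ X → ¬ Dominates G Y A

/-- `S` is an independent set in `G`. -/
def IndepSet (G : SimpleGraph V) (S : Set V) : Prop :=
  S.Pairwise fun x y => ¬ G.Adj x y

theorem stmt_3 [Fintype V] (G : SimpleGraph V) (Vi Vi1 Dstar : Set V) (v : V)
    (h1 : Vi ⊆ Vi1)
    (h3 : Vi1 \ Vi ⊆ closedNbhd G {v})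
    (h4 : closedNbhd G {v} ∩ Vi = ∅)
    (h5 : MinDom G Dstar Vi) (h6 : ¬ Dominates G Dstar Vi1) :
    MinDom G (Dstar ∪ {v}) Vi1 := by
  obtain ⟨hdom, hmin⟩ := h5
  -- v ∉ Dstar
  have hvD : v ∉ Dstar := by
    intro hv
    apply hmin (Dstar \ {v})
    · exact Set.sdiff_singleton_ssubset.mpr hv
    · intro x hx
      obtain ⟨w, hw, hwx⟩ := hdom hx
      refine ⟨w, ⟨hw, ?_⟩, hwx⟩
      intro hwv
      rw [Set.mem_singleton_iff] at hwv
      rw [hwv] at hwx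
      have : x ∈ closedNbhd G {v} ∩ Vi := ⟨⟨v, rfl, hwx⟩, hx⟩
      rw [h4] at this; exact this
  constructor
  · intro x hx
    by_cases hxi : x ∈ Vi
    · obtain ⟨w, hw, hwx⟩ := hdom hxi
      exact ⟨w, Or.inl hw, hwx⟩
    · obtain ⟨w, hw, hwx⟩ := h3 ⟨hx, hxi⟩
      exact ⟨w, Or.inr hw, hwx⟩
  · intro Y hY hYdom
    by_cases hvY : v ∈ Y
    · -- Y ∩ Dstar dominates Vi, and is a proper subset of Dstar
      have hsub : Y ∩ Dstar ⊆ Dstar := Set.inter_subset_right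
      obtain ⟨d, hd, hdY⟩ := Set.exists_of_ssubset hY
      have hdD : d ∈ Dstar := by
        rcases hd with h | h
        · exact h
        · exact absurd (h ▸ hvY) hdY
      apply hmin (Y ∩ Dstar)
      · exact ⟨hsub, fun hc => hdY (hc hdD).1⟩
      · intro x hx
        obtain ⟨w, hw, hwx⟩ := hYdom (h1 hx)
        have hwv : w ≠ v := by
          intro h
          rw [h] at hwx
          have : x ∈ closedNbhd G {v} ∩ Vi := ⟨⟨v, rfl, hwx⟩, hx⟩
          rw [h4] at this; exact this
        have hwD : w ∈ Dstar := by
          rcases hY.1 hw with h | h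
          · exact h
          · exact absurd h hwv
        exact ⟨w, ⟨hw, hwD⟩, hwx⟩
    · -- Y ⊆ Dstar
      have hYD : Y ⊆ Dstar := by
        intro y hy
        rcases hY.1 hy with h | h
        · exact h
        · exact absurd (h ▸ hy) hvY
      rcases eq_or_ssubset_of_subset hYD with h | h
      · subst h; exact h6 hYdom
      · exact hmin Y h (fun x hx => hYdom (h1 hx))
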